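/- Let r ≥ 1, t ∈ [r], and let f : 𝔽₂^r → {−1,1} be a Boolean function such that: f̂(e_j) ≠ 0 for every j ∈ [r]; Fdim(f^{(j)}) ≤ r − t for every j ∈ {2,…,t}; the Fourier support of f^{(1)} is contained in span{e_{t+1},…,e_r}; and the Fourier coefficient of f^{(1)} at e_ℓ is nonzero for every ℓ ∈ {t+1,…,r}. Then for every i ∈ {2,…,t}, the Fourier support of f^{(i)} is contained in span{e₁, e_{t+1},…,e_r}; in particular f^{(i)} does not depend on the variables x₂,…,x_t. -/
import Mathlib


/-- The Fourier coefficient of `f : 𝔽₂ⁿ → ℝ` at `S ∈ 𝔽₂ⁿ`. -/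
noncomputable def fCoeff {n : ℕ} (f : (Fin n → ZMod 2) → ℝ) (S : Fin n → ZMod 2) : ℝ :=
  (1 / 2 ^ n) * ∑ x : Fin n → ZMod 2, f x * (-1 : ℝ) ^ (∑ i, (S i).val * (x i).val)

/-- The Fourier support of `f`. -/
noncomputable def fSupp {n : ℕ} (f : (Fin n → ZMod 2) → ℝ) : Set (Fin n → ZMod 2) :=
  {S | fCoeff f S ≠ 0}

/-- The `j`-th standard basis vector of `𝔽₂ⁿ`. -/
def stdBasis {n : ℕ} (j : Fin n) : Fin n → ZMod 2 :=
  fun i => if i = j then 1 else 0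

/-- The restriction `g^{(i)}` of `g`, fixing `x_i = b` where `b ∈ {0,1}` is chosen so that
`(−1)^b·ĝ(e_i) = |ĝ(e_i)|` (and `b = 0` if `ĝ(e_i) = 0`). -/
noncomputable def restrictAt {n : ℕ} (g : (Fin n → ZMod 2) → ℝ) (i : Fin n) :
    (Fin n → ZMod 2) → ℝ :=
  fun x => g (Function.update x i (if fCoeff g (stdBasis i) < 0 then 1 else 0))

/- ### character basics -/

def chi (a : ZMod 2) : ℝ := (-1 : ℝ) ^ a.val

lemma chi_zero : chi 0 = 1 := by simp [chi]

lemma zmod2_cases : ∀ a : ZMod 2, a = 0 ∨ a = 1 := by decide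

lemma chi_one : chi 1 = -1 := by
  have h1 : (1 : ZMod 2).val = 1 := by decide
  rw [chi, h1]; norm_num

lemma chi_add (a b : ZMod 2) : chi (a + b) = chi a * chi b := by
  rcases zmod2_cases a with ha | ha <;> rcases zmod2_cases b with hb | hb <;>
    subst ha <;> subst hb <;>
    simp [chi_zero, chi_one, show (1 : ZMod 2) + 1 = 0 from by decide]

lemma chi_cases (a : ZMod 2) : chi a = 1 ∨ chi a = -1 := by
  rcases zmod2_cases a with ha | ha <;> subst ha <;> simp [chi_zero, chi_one]

lemma sum_zmod2 (f : ZMod 2 → ℝ) : ∑ c : ZMod 2, f c = f 0 + f 1 := by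
  rw [show (Finset.univ : Finset (ZMod 2)) = {0, 1} from by decide]
  rw [Finset.sum_pair (by decide)]

noncomputable def E {n : ℕ} (S x : Fin n → ZMod 2) : ℝ := ∏ i, chi (S i * x i)

lemma neg_one_pow_eq_E {n : ℕ} (S x : Fin n → ZMod 2) :
    (-1 : ℝ) ^ (∑ i, (S i).val * (x i).val) = E S x := by
  rw [E, ← Finset.prod_pow_eq_pow_sum]
  refine Finset.prod_congr rfl fun i _ => ?_
  have h : ∀ a b : ZMod 2, (a * b).val = a.val * b.val := by decide
  rw [chi, h]

lemma fCoeff_eq {n : ℕ} (f : (Fin n → ZMod 2) → ℝ) (S : Fin n → ZMod 2) :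
    fCoeff f S = (1 / 2 ^ n) * ∑ x : Fin n → ZMod 2, f x * E S x := by
  unfold fCoeff
  congr 1
  exact Finset.sum_congr rfl fun x _ => by rw [neg_one_pow_eq_E]

lemma E_comm {n : ℕ} (S x : Fin n → ZMod 2) : E S x = E x S := by
  unfold E; exact Finset.prod_congr rfl fun i _ => by rw [mul_comm]

lemma E_add_left {n : ℕ} (S T x : Fin n → ZMod 2) : E (S + T) x = E S x * E T x := by
  unfold E
  rw [← Finset.prod_mul_distrib]
  refine Finset.prod_congr rfl fun i _ => ?_
  have : (S + T) i * x i = S i * x i + T i * x i := by simp [add_mul]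
  rw [this, chi_add]

lemma sum_chi (v : ZMod 2) : ∑ c : ZMod 2, chi (v * c) = if v = 0 then 2 else 0 := by
  rw [sum_zmod2]
  rcases zmod2_cases v with hv | hv <;> subst hv <;>
    simp [chi_zero, chi_one, show (1 : ZMod 2) * 1 = 1 from by decide] <;> norm_num

lemma sum_E {n : ℕ} (V : Fin n → ZMod 2) :
    ∑ x : Fin n → ZMod 2, E V x = if V = 0 then (2 : ℝ) ^ n else 0 := by
  unfold E
  rw [← Fintype.prod_sum (fun i (c : ZMod 2) => chi (V i * c))]
  by_cases h : V = 0
  · subst h; simp [sum_chi, chi_zero]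
  · obtain ⟨i, hi⟩ : ∃ i, V i ≠ 0 := by
      by_contra hc; push_neg at hc; exact h (funext hc)
    rw [if_neg h]
    exact Finset.prod_eq_zero (Finset.mem_univ i) (by rw [sum_chi, if_neg hi])

lemma add_self_zero {n : ℕ} (x : Fin n → ZMod 2) : x + x = 0 := by
  funext i
  have h : ∀ a : ZMod 2, a + a = 0 := by decide
  exact h (x i)

lemma E_add_right {n : ℕ} (S x y : Fin n → ZMod 2) : E S (x + y) = E S x * E S y := by
  rw [E_comm S (x + y), E_add_left, E_comm x S, E_comm y S]

lemma inversion {n : ℕ} (g : (Fin n → ZMod 2) → ℝ) (x : Fin n → ZMod 2) :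
    g x = ∑ S : Fin n → ZMod 2, fCoeff g S * E S x := by
  have hiff : ∀ y : Fin n → ZMod 2, (x + y = 0) ↔ y = x := by
    intro y
    constructor
    · intro h
      have h2 : x + (x + y) = x + 0 := by rw [h]
      rw [← add_assoc, add_self_zero, zero_add, add_zero] at h2
      exact h2
    · intro h; rw [h]; exact add_self_zero x
  have key : ∑ S : Fin n → ZMod 2, fCoeff g S * E S x
      = (1 / 2 ^ n) * ∑ y : Fin n → ZMod 2, g y * ∑ S : Fin n → ZMod 2, E (x + y) S := by
    rw [Finset.sum_congr rfl (fun S (_ : S ∈ Finset.univ) => by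
      rw [fCoeff_eq g S, mul_assoc, Finset.sum_mul])]
    rw [← Finset.mul_sum, Finset.sum_comm]
    congr 1
    refine Finset.sum_congr rfl fun y _ => ?_
    rw [Finset.mul_sum]
    refine Finset.sum_congr rfl fun S _ => ?_
    rw [E_add_left, E_comm x S, E_comm y S, mul_assoc, mul_comm (E S y) (E S x)]
  rw [key]
  have : ∀ y : Fin n → ZMod 2, g y * ∑ S : Fin n → ZMod 2, E (x + y) S
      = if y = x then g y * 2 ^ n else 0 := by
    intro y
    rw [sum_E]
    by_cases h : y = x
    · rw [if_pos ((hiff y).mpr h), if_pos h]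
    · rw [if_neg (fun hc => h ((hiff y).mp hc)), if_neg h, mul_zero]
  rw [Finset.sum_congr rfl (fun y _ => this y), Finset.sum_ite_eq' Finset.univ x]
  simp only [Finset.mem_univ, if_true]
  have h2n : (2 : ℝ) ^ n ≠ 0 := by positivity
  field_simp

lemma pair_eq_iff {n : ℕ} (U S : Fin n → ZMod 2) : U + S = 0 ↔ U = S := by
  constructor
  · intro h
    have h2 : U + (U + S) = U + 0 := by rw [h]
    rw [← add_assoc, add_self_zero, zero_add, add_zero] at h2
    exact h2.symm
  · intro h; rw [h]; exact add_self_zero S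

lemma fCoeff_E {n : ℕ} (U S : Fin n → ZMod 2) :
    fCoeff (fun x => E U x) S = if U = S then 1 else 0 := by
  rw [fCoeff_eq]
  rw [Finset.sum_congr rfl (fun x (_ : x ∈ Finset.univ) => (E_add_left U S x).symm)]
  rw [sum_E]
  have h2n : (2 : ℝ) ^ n ≠ 0 := by positivity
  by_cases h : U = S
  · rw [if_pos ((pair_eq_iff U S).mpr h), if_pos h]; field_simp
  · rw [if_neg (fun hc => h ((pair_eq_iff U S).mp hc)), if_neg h, mul_zero]

lemma fCoeff_sum {n : ℕ} {ι : Type*} [Fintype ι] (h : ι → (Fin n → ZMod 2) → ℝ)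
    (S : Fin n → ZMod 2) :
    fCoeff (fun x => ∑ T : ι, h T x) S = ∑ T : ι, fCoeff (h T) S := by
  unfold fCoeff
  beta_reduce
  rw [← Finset.mul_sum]
  congr 1
  rw [Finset.sum_comm]
  refine Finset.sum_congr rfl fun x _ => ?_
  rw [Finset.sum_mul]

lemma fCoeff_smul {n : ℕ} (c : ℝ) (h : (Fin n → ZMod 2) → ℝ) (S : Fin n → ZMod 2) :
    fCoeff (fun x => c * h x) S = c * fCoeff h S := by
  unfold fCoeff
  beta_reduce
  rw [Finset.sum_congr rfl (fun x (_ : x ∈ Finset.univ) =>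
    mul_assoc c (h x) ((-1 : ℝ) ^ ∑ i, (S i).val * (x i).val))]
  rw [← Finset.mul_sum]
  ring

noncomputable def bbit {n : ℕ} (g : (Fin n → ZMod 2) → ℝ) (i : Fin n) : ZMod 2 :=
  if fCoeff g (stdBasis i) < 0 then 1 else 0

lemma E_update {n : ℕ} (T x : Fin n → ZMod 2) (i : Fin n) (b : ZMod 2) :
    E T (Function.update x i b) = chi (T i * b) * E (Function.update T i 0) x := by
  unfold E
  rw [← Finset.mul_prod_erase Finset.univ _ (Finset.mem_univ i),
      ← Finset.mul_prod_erase Finset.univ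
        (fun j => chi (Function.update T i 0 j * x j)) (Finset.mem_univ i)]
  rw [Function.update_self, Function.update_self, zero_mul, chi_zero, one_mul]
  congr 1
  refine Finset.prod_congr rfl fun j hj => ?_
  have hji : j ≠ i := Finset.ne_of_mem_erase hj
  rw [Function.update_of_ne hji, Function.update_of_ne hji]

lemma restrict_expand {n : ℕ} (g : (Fin n → ZMod 2) → ℝ) (i : Fin n)
    (x : Fin n → ZMod 2) :
    restrictAt g i x = ∑ T : Fin n → ZMod 2,
      (fCoeff g T * chi (T i * bbit g i)) * E (Function.update T i 0) x := by
  unfold restrictAt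
  rw [inversion g (Function.update x i (if fCoeff g (stdBasis i) < 0 then 1 else 0))]
  refine Finset.sum_congr rfl fun T _ => ?_
  rw [show (if fCoeff g (stdBasis i) < 0 then (1 : ZMod 2) else 0) = bbit g i from rfl]
  rw [E_update, mul_assoc]

lemma restrict_coeff_zero {n : ℕ} (g : (Fin n → ZMod 2) → ℝ) (i : Fin n)
    (S : Fin n → ZMod 2) (h : S i ≠ 0) : fCoeff (restrictAt g i) S = 0 := by
  have hfun : restrictAt g i = fun x => ∑ T : Fin n → ZMod 2,
      (fCoeff g T * chi (T i * bbit g i)) * E (Function.update T i 0) x :=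
    funext fun x => restrict_expand g i x
  rw [hfun, fCoeff_sum]
  refine Finset.sum_eq_zero fun T _ => ?_
  rw [fCoeff_smul, fCoeff_E, if_neg, mul_zero]
  intro hc
  apply h
  rw [← hc, Function.update_self]

lemma restrict_coeff {n : ℕ} (g : (Fin n → ZMod 2) → ℝ) (i : Fin n)
    (S : Fin n → ZMod 2) (h : S i = 0) :
    fCoeff (restrictAt g i) S
      = fCoeff g S + chi (bbit g i) * fCoeff g (Function.update S i 1) := by
  have hfun : restrictAt g i = fun x => ∑ T : Fin n → ZMod 2,
      (fCoeff g T * chi (T i * bbit g i)) * E (Function.update T i 0) x :=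
    funext fun x => restrict_expand g i x
  rw [hfun, fCoeff_sum]
  have step : ∀ T : Fin n → ZMod 2,
      fCoeff (fun x => (fCoeff g T * chi (T i * bbit g i)) * E (Function.update T i 0) x) S
      = if Function.update T i 0 = S then fCoeff g T * chi (T i * bbit g i) else 0 := by
    intro T
    rw [fCoeff_smul, fCoeff_E]
    by_cases hc : Function.update T i 0 = S <;> simp [hc]
  rw [Finset.sum_congr rfl (fun T _ => step T), ← Finset.sum_filter]
  have hset : Finset.univ.filter (fun T : Fin n → ZMod 2 => Function.update T i 0 = S)
      = {S, Function.update S i 1} := by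
    ext T
    simp only [Finset.mem_filter, Finset.mem_univ, true_and, Finset.mem_insert,
      Finset.mem_singleton]
    constructor
    · intro hT
      rcases zmod2_cases (T i) with h0 | h1
      · left
        rw [← hT]
        funext j
        by_cases hj : j = i
        · subst hj; rw [Function.update_self, h0]
        · rw [Function.update_of_ne hj]
      · right
        funext j
        by_cases hj : j = i
        · subst hj; rw [Function.update_self, h1]
        · rw [Function.update_of_ne hj, ← hT, Function.update_of_ne hj]
    · intro hT
      rcases hT with hT | hT
      · subst hT
        funext j
        by_cases hj : j = i
        · subst hj; rw [Function.update_self, h]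
        · rw [Function.update_of_ne hj]
      · subst hT
        funext j
        by_cases hj : j = i
        · subst hj; simp [h]
        · simp [Function.update_of_ne hj]
  rw [hset]
  have hne : S ≠ Function.update S i 1 := by
    intro hc
    have := congrFun hc i
    rw [Function.update_self, h] at this
    exact one_ne_zero this.symm
  rw [Finset.sum_pair hne]
  rw [h, zero_mul, chi_zero, mul_one, Function.update_self, one_mul, mul_comm]

lemma stdBasis_self {n : ℕ} (j : Fin n) : stdBasis j j = 1 := if_pos rfl

lemma stdBasis_ne {n : ℕ} {j k : Fin n} (h : k ≠ j) : stdBasis j k = 0 := if_neg h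

lemma span_coord_zero {n : ℕ} {G : Set (Fin n → ZMod 2)} {j : Fin n}
    (hG : ∀ w ∈ G, w j = 0) {v : Fin n → ZMod 2}
    (hv : v ∈ Submodule.span (ZMod 2) G) : v j = 0 := by
  have hle : Submodule.span (ZMod 2) G ≤ LinearMap.ker (LinearMap.proj j) :=
    Submodule.span_le.mpr fun w hw => by
      rw [SetLike.mem_coe, LinearMap.mem_ker, LinearMap.proj_apply]
      exact hG w hw
  have := hle hv
  rwa [LinearMap.mem_ker, LinearMap.proj_apply] at this

lemma fin_ne_of_val_lt {n : ℕ} {a b : Fin n} (h : a.val < b.val) : a ≠ b :=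
  fun hc => absurd (congrArg Fin.val hc) (by omega)


/-- Suppose `f : 𝔽₂^r → {−1,1}` is such that `f̂(e_j) ≠ 0` for all `j ∈ [r]`;
`Fdim(f^{(j)}) ≤ r − t` for `j ∈ {2,…,t}`; the Fourier support of `f^{(1)}` is contained
in `span{e_{t+1},…,e_r}`; and the Fourier coefficient of `f^{(1)}` at `e_ℓ` is nonzero for
`ℓ ∈ {t+1,…,r}`. Then for every `i ∈ {2,…,t}`, the Fourier support of `f^{(i)}` is
contained in `span{e₁, e_{t+1},…,e_r}`; in particular `f^{(i)}` does not depend on the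
variables `x₂,…,x_t`.
(Indices of coordinates are 0-based here: coordinate `1 ≤ j ≤ r` of the paper
corresponds to the Lean index `j - 1 : Fin r`.) -/
theorem restrict_indep_of_middle_vars {r : ℕ} (hr : 1 ≤ r) (t : ℕ) (ht1 : 1 ≤ t) (htr : t ≤ r)
    (f : (Fin r → ZMod 2) → ℝ) (hf : ∀ x, f x = 1 ∨ f x = -1)
    (hcoeff : ∀ j : Fin r, fCoeff f (stdBasis j) ≠ 0)
    (hdims : ∀ j : Fin r, 1 ≤ j.val → j.val < t →
      Module.finrank (ZMod 2) (Submodule.span (ZMod 2) (fSupp (restrictAt f j))) ≤ r - t)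
    (hsupp1 : fSupp (restrictAt f ⟨0, hr⟩) ⊆
      ↑(Submodule.span (ZMod 2) {v | ∃ ℓ : Fin r, t ≤ ℓ.val ∧ v = stdBasis ℓ}))
    (hcoeff1 : ∀ ℓ : Fin r, t ≤ ℓ.val →
      fCoeff (restrictAt f ⟨0, hr⟩) (stdBasis ℓ) ≠ 0) :
    ∀ i : Fin r, 1 ≤ i.val → i.val < t →
      (fSupp (restrictAt f i) ⊆
        ↑(Submodule.span (ZMod 2)
          ({stdBasis ⟨0, hr⟩} ∪ {v | ∃ ℓ : Fin r, t ≤ ℓ.val ∧ v = stdBasis ℓ}))) ∧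
      (∀ x y : Fin r → ZMod 2, (∀ j : Fin r, ¬(1 ≤ j.val ∧ j.val < t) → x j = y j) →
        restrictAt f i x = restrictAt f i y) := by
  classical
  intro i hi1 hit
  set i0 : Fin r := ⟨0, hr⟩ with hi0def
  have hi0v : i0.val = 0 := rfl
  have hii0 : i ≠ i0 := fun h => by
    rw [h, hi0v] at hi1; exact Nat.not_succ_le_zero 0 hi1
  set G : Set (Fin r → ZMod 2) := {v | ∃ ℓ : Fin r, t ≤ ℓ.val ∧ v = stdBasis ℓ} with hGdef
  set U : Set (Fin r → ZMod 2) := {stdBasis i0} ∪ G with hUdef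
  -- G vanishes at any coordinate < t
  have hGzero : ∀ j : Fin r, j.val < t → ∀ w ∈ G, w j = 0 := by
    intro j hjt w hw
    obtain ⟨ℓ, hℓ, rfl⟩ := hw
    exact stdBasis_ne (fin_ne_of_val_lt (lt_of_lt_of_le hjt hℓ))
  have hUzero : ∀ j : Fin r, 1 ≤ j.val → j.val < t → ∀ w ∈ U, w j = 0 := by
    intro j hj1 hjt w hw
    rcases hw with hw | hw
    · rw [Set.mem_singleton_iff] at hw
      rw [hw]
      exact stdBasis_ne (fun hc => by rw [hc, hi0v] at hj1; exact Nat.not_succ_le_zero 0 hj1)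
    · exact hGzero j hjt w hw
  -- key claim
  have key : ∀ ℓ : Fin r, t ≤ ℓ.val →
      fCoeff (restrictAt f i) (stdBasis ℓ) ≠ 0 ∨
      fCoeff (restrictAt f i) (Function.update (stdBasis ℓ) i0 1) ≠ 0 := by
    intro ℓ hℓ
    have hiℓ : i ≠ ℓ := fin_ne_of_val_lt (lt_of_lt_of_le hit hℓ)
    have hi0ℓ : i0 ≠ ℓ := fin_ne_of_val_lt (by rw [hi0v]; omega)
    by_contra hc
    push_neg at hc
    obtain ⟨h3, h4⟩ := hc
    -- e2 : the (e_ℓ + e_i)-coefficient of f^{(1)} vanishes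
    have h2 : fCoeff (restrictAt f i0) (Function.update (stdBasis ℓ) i 1) = 0 := by
      by_contra hB
      have hmem : Function.update (stdBasis ℓ) i 1 ∈ Submodule.span (ZMod 2) G := hsupp1 hB
      have hz := span_coord_zero (hGzero i hit) hmem
      rw [Function.update_self] at hz
      exact one_ne_zero hz
    have hc2 : (Function.update (stdBasis ℓ) i 1) i0 = 0 := by
      rw [Function.update_of_ne hii0.symm]; exact stdBasis_ne hi0ℓ
    rw [restrict_coeff f i0 _ hc2] at h2
    -- e1
    have h1 := hcoeff1 ℓ hℓ
    rw [restrict_coeff f i0 _ (stdBasis_ne hi0ℓ)] at h1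
    -- e3
    rw [restrict_coeff f i _ (stdBasis_ne hiℓ)] at h3
    -- e4
    have hc4 : (Function.update (stdBasis ℓ) i0 1) i = 0 := by
      rw [Function.update_of_ne hii0]; exact stdBasis_ne hiℓ
    rw [restrict_coeff f i _ hc4] at h4
    rw [← Function.update_comm hii0 (1 : ZMod 2) (1 : ZMod 2) (stdBasis ℓ)] at h4
    apply h1
    linear_combination h3 - chi (bbit f i) * h2 + chi (bbit f i0) * h4
  -- the independent family
  let ι := {ℓ : Fin r // t ≤ ℓ.val}
  have hcard : Fintype.card ι = r - t := by
    have e : ι ≃ Fin (r - t) :=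
      { toFun := fun ℓ => ⟨ℓ.1.val - t, by have := ℓ.1.isLt; have := ℓ.2; omega⟩
        invFun := fun k => ⟨⟨k.val + t, by have := k.isLt; omega⟩, by simp⟩
        left_inv := fun ℓ => by
          apply Subtype.ext; apply Fin.ext; simp; have := ℓ.2; omega
        right_inv := fun k => by apply Fin.ext; simp }
    rw [Fintype.card_congr e, Fintype.card_fin]
  let v : ι → (Fin r → ZMod 2) := fun ℓ =>
    if fCoeff (restrictAt f i) (stdBasis ℓ.1) ≠ 0 then stdBasis ℓ.1
    else Function.update (stdBasis ℓ.1) i0 1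
  have hv_supp : ∀ ℓ : ι, v ℓ ∈ fSupp (restrictAt f i) := by
    intro ℓ
    by_cases h : fCoeff (restrictAt f i) (stdBasis ℓ.1) ≠ 0
    · show fCoeff _ (v ℓ) ≠ 0
      rw [show v ℓ = stdBasis ℓ.1 from if_pos h]
      exact h
    · show fCoeff _ (v ℓ) ≠ 0
      rw [show v ℓ = Function.update (stdBasis ℓ.1) i0 1 from if_neg h]
      exact (key ℓ.1 ℓ.2).resolve_left h
  have hv_span : ∀ ℓ : ι, v ℓ ∈ Submodule.span (ZMod 2) U := by
    intro ℓ
    have hi0ℓ : i0 ≠ ℓ.1 := fin_ne_of_val_lt (by rw [hi0v]; have := ℓ.2; omega)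
    have hstd : stdBasis ℓ.1 ∈ Submodule.span (ZMod 2) U :=
      Submodule.subset_span (Or.inr ⟨ℓ.1, ℓ.2, rfl⟩)
    by_cases h : fCoeff (restrictAt f i) (stdBasis ℓ.1) ≠ 0
    · rw [show v ℓ = stdBasis ℓ.1 from if_pos h]; exact hstd
    · rw [show v ℓ = Function.update (stdBasis ℓ.1) i0 1 from if_neg h]
      have hdecomp : Function.update (stdBasis ℓ.1) i0 1 = stdBasis i0 + stdBasis ℓ.1 := by
        funext j
        by_cases hj : j = i0
        · subst hj
          rw [Function.update_self, Pi.add_apply, stdBasis_self, stdBasis_ne hi0ℓ, add_zero]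
        · rw [Function.update_of_ne hj, Pi.add_apply, stdBasis_ne hj, zero_add]
      rw [hdecomp]
      exact Submodule.add_mem _ (Submodule.subset_span (Or.inl rfl)) hstd
  have hli : LinearIndependent (ZMod 2) v := by
    have hπv : ∀ ℓ ℓ' : ι, v ℓ ℓ'.1 = if ℓ' = ℓ then 1 else 0 := by
      intro ℓ ℓ'
      have hne0 : ℓ'.1 ≠ i0 := fun h => by
        have := ℓ'.2; rw [h, hi0v] at this; omega
      have hval : stdBasis ℓ.1 ℓ'.1 = if ℓ' = ℓ then 1 else 0 := by
        by_cases h : ℓ' = ℓ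
        · rw [if_pos h, h, stdBasis_self]
        · rw [if_neg h, stdBasis_ne (fun hc => h (Subtype.ext hc))]
      by_cases h : fCoeff (restrictAt f i) (stdBasis ℓ.1) ≠ 0
      · rw [show v ℓ = stdBasis ℓ.1 from if_pos h]; exact hval
      · rw [show v ℓ = Function.update (stdBasis ℓ.1) i0 1 from if_neg h]
        rw [Function.update_of_ne hne0]; exact hval
    let π : (Fin r → ZMod 2) →ₗ[ZMod 2] (ι → ZMod 2) :=
      LinearMap.pi fun ℓ' => LinearMap.proj ℓ'.1
    have hcomp : π ∘ v = fun ℓ => (Pi.single ℓ 1 : ι → ZMod 2) := by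
      funext ℓ ℓ'
      show v ℓ ℓ'.1 = (Pi.single ℓ 1 : ι → ZMod 2) ℓ'
      rw [hπv ℓ ℓ', Pi.single_apply]
    apply LinearIndependent.of_comp π
    rw [hcomp]
    have hb := (Pi.basisFun (ZMod 2) ι).linearIndependent
    rwa [show ⇑(Pi.basisFun (ZMod 2) ι) = fun ℓ => (Pi.single ℓ 1 : ι → ZMod 2) from
      funext fun ℓ => by simp] at hb
  have hrange : Set.range v ⊆ fSupp (restrictAt f i) := by
    rintro w ⟨ℓ, rfl⟩; exact hv_supp ℓ
  have hle : Submodule.span (ZMod 2) (Set.range v)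
      ≤ Submodule.span (ZMod 2) (fSupp (restrictAt f i)) := Submodule.span_mono hrange
  have hfr1 : Module.finrank (ZMod 2) (Submodule.span (ZMod 2) (Set.range v)) = r - t := by
    rw [finrank_span_eq_card hli, hcard]
  have heq : Submodule.span (ZMod 2) (Set.range v)
      = Submodule.span (ZMod 2) (fSupp (restrictAt f i)) :=
    Submodule.eq_of_le_of_finrank_le hle (by rw [hfr1]; exact hdims i hi1 hit)
  have hpart1 : fSupp (restrictAt f i) ⊆ ↑(Submodule.span (ZMod 2) U) := by
    intro S hS
    have h1 : S ∈ Submodule.span (ZMod 2) (fSupp (restrictAt f i)) :=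
      Submodule.subset_span hS
    rw [← heq] at h1
    have h2 : Submodule.span (ZMod 2) (Set.range v) ≤ Submodule.span (ZMod 2) U :=
      Submodule.span_le.mpr (by rintro w ⟨ℓ, rfl⟩; exact hv_span ℓ)
    exact h2 h1
  refine ⟨hpart1, ?_⟩
  intro x y hxy
  rw [inversion (restrictAt f i) x, inversion (restrictAt f i) y]
  refine Finset.sum_congr rfl fun S _ => ?_
  by_cases hS : fCoeff (restrictAt f i) S = 0
  · rw [hS, zero_mul, zero_mul]
  · have hmem : S ∈ Submodule.span (ZMod 2) U := hpart1 hS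
    congr 1
    unfold E
    refine Finset.prod_congr rfl fun j _ => ?_
    by_cases hj : 1 ≤ j.val ∧ j.val < t
    · have hz : S j = 0 := span_coord_zero (hUzero j hj.1 hj.2) hmem
      rw [hz, zero_mul, zero_mul]
    · rw [hxy j hj]
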